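/- Reduction of the Kleene star of a rank-one perturbation: let B be an n×n max-plus matrix with Tr(B) ≤ 0, let p, q be nonzero vectors, and let θ = ⊕_{0≤i+j≤n−2}(h⁻B^i p)(q⁻B^j g) ⊕ q⁻B*p ≥ q⁻B*p. Then the Kleene star satisfies (θ^{−1} p q⁻ ⊕ B)* = ⊕_{0 ≤ i+j ≤ n−2} θ^{−1} B^i p q⁻ B^j ⊕ B*. -/

import Mathlib

noncomputable section
abbrev T := WithBot ℝ

/-- Tropical (max-plus) sum over a finite family. -/
def tSum {n : ℕ} (f : Fin n → T) : T := Finset.univ.sup f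

/-- Tropical matrix product. -/
def tMulM {m n p : ℕ} (A : Matrix (Fin m) (Fin n) T) (B : Matrix (Fin n) (Fin p) T) :
    Matrix (Fin m) (Fin p) T := fun i j => tSum fun k => A i k + B k j

/-- Tropical identity matrix. -/
def tId (n : ℕ) : Matrix (Fin n) (Fin n) T := fun i j => if i = j then (0 : T) else ⊥

/-- Tropical matrix power. -/
def tpow {n : ℕ} (A : Matrix (Fin n) (Fin n) T) : ℕ → Matrix (Fin n) (Fin n) T
  | 0 => tId n
  | k + 1 => tMulM (tpow A k) A

/-- Tropical trace. -/
def tTr {n : ℕ} (A : Matrix (Fin n) (Fin n) T) : T := tSum fun k => A k k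

/-- Multiplicative conjugate of a scalar: negation on finite entries, -∞ ↦ -∞. -/
def tconj (t : T) : T := WithBot.map (fun a : ℝ => -a) t

/-- Kleene star (for an n×n matrix): I ⊕ A ⊕ ⋯ ⊕ A^(n-1). -/
def kstar {n : ℕ} (A : Matrix (Fin n) (Fin n) T) : Matrix (Fin n) (Fin n) T :=
  fun i j => tSum fun k : Fin n => tpow A (k : ℕ) i j

/-- Tr(A) = tr A ⊕ ⋯ ⊕ tr Aⁿ. -/
def TrB {n : ℕ} (A : Matrix (Fin n) (Fin n) T) : T := tSum fun k : Fin n => tTr (tpow A ((k : ℕ) + 1))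

/-- Tropical root: t^{1/k} = t/k. -/
def tdiv (t : T) (k : ℕ) : T := WithBot.map (fun a : ℝ => a / k) t

/-- Row vector × matrix × column vector. -/
def vMv {n : ℕ} (u : Fin n → T) (A : Matrix (Fin n) (Fin n) T) (v : Fin n → T) : T :=
  tSum fun i => u i + tSum fun j => A i j + v j

/-- The rank-one matrix p q⁻. -/
def pqm {n : ℕ} (p q : Fin n → T) : Matrix (Fin n) (Fin n) T := fun i j => p i + tconj (q j)

/-- Pairs (i,j) of exponents with 0 ≤ i + j ≤ n − 2. -/
def pairSet (n : ℕ) : Finset (ℕ × ℕ) :=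
  (Finset.range n ×ˢ Finset.range n).filter (fun ij => ij.1 + ij.2 + 2 ≤ n)

/-! ### Auxiliary lemmas -/

lemma tconj_add_cancel (θ : T) (h : θ ≠ ⊥) : tconj θ + θ = 0 := by
  lift θ to ℝ using h
  simp [tconj]
  rw [← WithBot.coe_add]
  norm_num

lemma add_finsetSup {ι : Type*} (c : T) (s : Finset ι) (f : ι → T) :
    c + s.sup f = s.sup fun i => c + f i := by
  induction s using Finset.cons_induction with
  | empty => simp
  | cons a s ha ih =>
      rw [Finset.sup_cons, Finset.sup_cons, ← ih]
      rcases le_total (f a) (s.sup f) with h|h <;>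
        simp [max_eq_right, max_eq_left, h, add_le_add_left, add_le_add_right]

lemma finsetSup_add {ι : Type*} (s : Finset ι) (f : ι → T) (c : T) :
    s.sup f + c = s.sup fun i => f i + c := by
  rw [add_comm, add_finsetSup]; simp [add_comm]

lemma add_tSum {n : ℕ} (c : T) (f : Fin n → T) : c + tSum f = tSum (fun i => c + f i) :=
  add_finsetSup c _ f

lemma tSum_add {n : ℕ} (f : Fin n → T) (c : T) : tSum f + c = tSum (fun i => f i + c) :=
  finsetSup_add _ f c

lemma tSum_le {n : ℕ} {f : Fin n → T} {c : T} (h : ∀ i, f i ≤ c) : tSum f ≤ c :=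
  Finset.sup_le fun i _ => h i
lemma le_tSum {n : ℕ} (f : Fin n → T) (i : Fin n) : f i ≤ tSum f :=
  Finset.le_sup (Finset.mem_univ i)
lemma tSum_mono {n : ℕ} {f g : Fin n → T} (h : ∀ i, f i ≤ g i) : tSum f ≤ tSum g :=
  Finset.sup_mono_fun fun i _ => h i
lemma tSum_comm {m k : ℕ} (f : Fin m → Fin k → T) :
    tSum (fun i => tSum fun j => f i j) = tSum (fun j => tSum fun i => f i j) := by
  unfold tSum; exact Finset.sup_comm _ _ _

lemma tMulM_assoc {m n p r : ℕ} (A : Matrix (Fin m) (Fin n) T) (B : Matrix (Fin n) (Fin p) T)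
    (C : Matrix (Fin p) (Fin r) T) : tMulM (tMulM A B) C = tMulM A (tMulM B C) := by
  funext i j
  unfold tMulM
  simp only [tSum_add, add_tSum]
  rw [tSum_comm]
  simp [add_assoc]

lemma tMulM_tId {m n : ℕ} (A : Matrix (Fin m) (Fin n) T) : tMulM A (tId n) = A := by
  funext i j
  unfold tMulM tId
  apply le_antisymm
  · apply tSum_le; intro k
    by_cases h : k = j <;> simp [h]
  · have := le_tSum (fun k => A i k + if k = j then (0:T) else ⊥) j
    simpa using this

lemma tId_tMulM {m n : ℕ} (A : Matrix (Fin m) (Fin n) T) : tMulM (tId m) A = A := by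
  funext i j
  unfold tMulM tId
  apply le_antisymm
  · apply tSum_le; intro k
    by_cases h : i = k <;> simp [h]
  · have := le_tSum (fun k => (if i = k then (0:T) else ⊥) + A k j) i
    simpa using this

lemma tpow_add {n : ℕ} (A : Matrix (Fin n) (Fin n) T) (i j : ℕ) :
    tpow A (i + j) = tMulM (tpow A i) (tpow A j) := by
  induction j with
  | zero => simp [tpow, tMulM_tId]
  | succ j ih =>
      have e : i + (j+1) = (i+j)+1 := by omega
      rw [e]
      show tMulM (tpow A (i+j)) A = _
      rw [ih, tMulM_assoc]
      rfl

lemma tMulM_mono {m n p : ℕ} {A A' : Matrix (Fin m) (Fin n) T} {B B' : Matrix (Fin n) (Fin p) T}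
    (hA : ∀ i j, A i j ≤ A' i j) (hB : ∀ i j, B i j ≤ B' i j) :
    ∀ i j, tMulM A B i j ≤ tMulM A' B' i j := by
  intro i j
  exact tSum_mono fun k => add_le_add (hA i k) (hB k j)

lemma tpow_mono {n : ℕ} {A A' : Matrix (Fin n) (Fin n) T}
    (hA : ∀ i j, A i j ≤ A' i j) (k : ℕ) : ∀ i j, tpow A k i j ≤ tpow A' k i j := by
  induction k with
  | zero => intro i j; exact le_rfl
  | succ k ih => exact tMulM_mono ih hA

lemma tMulM_smul_right {m n p : ℕ} (A : Matrix (Fin m) (Fin n) T) (s : T)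
    (B : Matrix (Fin n) (Fin p) T) :
    tMulM A (fun i j => s + B i j) = fun i j => s + tMulM A B i j := by
  funext i j
  unfold tMulM
  rw [add_tSum]
  congr 1; funext k; abel

lemma tMulM_smul_left {m n p : ℕ} (s : T) (A : Matrix (Fin m) (Fin n) T)
    (B : Matrix (Fin n) (Fin p) T) :
    tMulM (fun i j => s + A i j) B = fun i j => s + tMulM A B i j := by
  funext i j
  unfold tMulM
  rw [add_tSum]
  congr 1; funext k; rw [add_assoc]

/-- Pairs with i + j + 1 ≤ k. -/
def Pset (n k : ℕ) : Finset (ℕ × ℕ) :=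
  (Finset.range n ×ˢ Finset.range n).filter fun ij => ij.1 + ij.2 + 1 ≤ k

lemma max_add_le {s u x y t : T} (h1 : s + x ≤ t) (h2 : s + y ≤ t) (h3 : u + x ≤ t)
    (h4 : u + y ≤ t) : max s u + max x y ≤ t := by
  rcases max_cases s u with ⟨e,_⟩|⟨e,_⟩ <;> rcases max_cases x y with ⟨f,_⟩|⟨f,_⟩ <;>
    rw [e, f] <;> assumption
set_option maxHeartbeats 2000000 in
/-- Kleene star of the rank-one perturbation:
(θ⁻¹ p q⁻ ⊕ B)* = ⊕_{0 ≤ i+j ≤ n−2} θ⁻¹ B^i p q⁻ B^j ⊕ B*. -/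
theorem tropical_kleene_star_rank_one_perturbation {n : ℕ}
    (B : Matrix (Fin n) (Fin n) T) (p q : Fin n → T) (g : Fin n → T) (h : Fin n → ℝ)
    (hp : ∃ i, p i ≠ ⊥) (hq : ∃ i, q i ≠ ⊥) (hTr : TrB B ≤ 0)
    (θ : T)
    (hθdef : θ = max
      ((pairSet n).sup fun ij =>
        vMv (fun l => ((-(h l) : ℝ) : T)) (tpow B ij.1) p +
          vMv (fun l => tconj (q l)) (tpow B ij.2) g)
      (vMv (fun l => tconj (q l)) (kstar B) p))
    (hθ : θ ≠ ⊥) :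
    ∀ a b : Fin n,
      kstar (fun i j => max (tconj θ + (p i + tconj (q j))) (B i j)) a b =
        max ((pairSet n).sup fun ij =>
            tconj θ + tMulM (tMulM (tpow B ij.1) (pqm p q)) (tpow B ij.2) a b)
          (kstar B a b) := by
  intro a b
  set M : Matrix (Fin n) (Fin n) T :=
    fun i j => max (tconj θ + (p i + tconj (q j))) (B i j) with hMdef
  -- θ dominates q⁻ Bʲ p for j < n
  have hθge : ∀ j, j < n → ∀ c d, tconj (q c) + (tpow B j c d + p d) ≤ θ := by
    intro j hj c d
    rw [hθdef]
    apply le_max_of_le_right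
    calc tconj (q c) + (tpow B j c d + p d)
        ≤ tconj (q c) + (kstar B c d + p d) := by
          refine add_le_add le_rfl (add_le_add ?_ le_rfl)
          exact le_tSum (fun k : Fin n => tpow B (k : ℕ) c d) ⟨j, hj⟩
      _ ≤ tconj (q c) + tSum (fun d' => kstar B c d' + p d') :=
          add_le_add le_rfl (le_tSum (fun d' => kstar B c d' + p d') d)
      _ ≤ vMv (fun l => tconj (q l)) (kstar B) p := by
          unfold vMv
          exact le_tSum (fun c' => tconj (q c') + tSum fun d' => kstar B c' d' + p d') c
  -- abbreviation for the mixed terms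
  have hW0 : ∀ i : ℕ, tMulM (tMulM (tpow B i) (pqm p q)) (tpow B 0)
      = tMulM (tpow B i) (pqm p q) := fun i => tMulM_tId _
  have hWsucc : ∀ i j : ℕ, tMulM (tMulM (tpow B i) (pqm p q)) (tpow B (j+1))
      = tMulM (tMulM (tMulM (tpow B i) (pqm p q)) (tpow B j)) B := by
    intro i j
    show _ = tMulM (tMulM (tMulM (tpow B i) (pqm p q)) (tpow B j)) B
    rw [tMulM_assoc (tMulM (tpow B i) (pqm p q)) (tpow B j) B]
    rfl
  -- upper bound on each power of M
  have upper : ∀ k, k < n → ∀ a b : Fin n, tpow M k a b ≤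
      max ((Pset n k).sup fun ij =>
        tconj θ + tMulM (tMulM (tpow B ij.1) (pqm p q)) (tpow B ij.2) a b)
        (tpow B k a b) := by
    intro k
    induction k with
    | zero => intro _ a b; exact le_max_right _ _
    | succ k ih =>
      intro hk a b
      have hk' : k < n := by omega
      show tSum (fun c => tpow M k a c + M c b) ≤ _
      apply tSum_le
      intro c
      refine le_trans (add_le_add (ih hk' a c) le_rfl) ?_
      have hMcb : M c b = max (tconj θ + (p c + tconj (q b))) (B c b) := rfl
      rw [hMcb]
      apply max_add_le
      -- case: mixed ⋅ X
      · rw [finsetSup_add]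
        apply Finset.sup_le
        intro ij hij
        simp only [Pset, Finset.mem_filter, Finset.mem_product, Finset.mem_range] at hij
        have key : tMulM (tMulM (tpow B ij.1) (pqm p q)) (tpow B ij.2) a c
            + (p c + tconj (q b))
            ≤ θ + tMulM (tMulM (tpow B ij.1) (pqm p q)) (tpow B 0) a b := by
          show tSum (fun d => tMulM (tpow B ij.1) (pqm p q) a d + tpow B ij.2 d c)
              + (p c + tconj (q b)) ≤ _
          rw [tSum_add]
          apply tSum_le
          intro d
          have e1 : (tMulM (tpow B ij.1) (pqm p q) a d + tpow B ij.2 d c)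
              + (p c + tconj (q b))
              = tSum (fun e => ((tpow B ij.1 a e + pqm p q e d) + tpow B ij.2 d c)
                  + (p c + tconj (q b))) := by
            show (tSum (fun e => tpow B ij.1 a e + pqm p q e d) + tpow B ij.2 d c)
                + (p c + tconj (q b)) = _
            rw [tSum_add, tSum_add]
          rw [e1]
          apply tSum_le
          intro e
          have e2 : ((tpow B ij.1 a e + pqm p q e d) + tpow B ij.2 d c)
              + (p c + tconj (q b))
              = (tconj (q d) + (tpow B ij.2 d c + p c))
                + (tpow B ij.1 a e + (p e + tconj (q b))) := by
            show ((tpow B ij.1 a e + (p e + tconj (q d))) + tpow B ij.2 d c)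
                + (p c + tconj (q b)) = _
            abel
          rw [e2]
          have e3 : tpow B ij.1 a e + (p e + tconj (q b))
              ≤ tMulM (tMulM (tpow B ij.1) (pqm p q)) (tpow B 0) a b := by
            rw [hW0]
            exact le_tSum (fun e => tpow B ij.1 a e + pqm p q e b) e
          exact add_le_add (hθge ij.2 (by omega) d c) e3
        have hmem : (ij.1, 0) ∈ Pset n (k+1) := by
          simp only [Pset, Finset.mem_filter, Finset.mem_product, Finset.mem_range]
          omega
        calc (tconj θ + tMulM (tMulM (tpow B ij.1) (pqm p q)) (tpow B ij.2) a c)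
              + (tconj θ + (p c + tconj (q b)))
            = (tconj θ + tconj θ)
              + (tMulM (tMulM (tpow B ij.1) (pqm p q)) (tpow B ij.2) a c
                + (p c + tconj (q b))) := by abel
          _ ≤ (tconj θ + tconj θ)
              + (θ + tMulM (tMulM (tpow B ij.1) (pqm p q)) (tpow B 0) a b) :=
              add_le_add le_rfl key
          _ = (tconj θ + θ)
              + (tconj θ + tMulM (tMulM (tpow B ij.1) (pqm p q)) (tpow B 0) a b) := by abel
          _ = tconj θ + tMulM (tMulM (tpow B ij.1) (pqm p q)) (tpow B 0) a b := by
              rw [tconj_add_cancel θ hθ, zero_add]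
          _ ≤ (Pset n (k+1)).sup (fun ij =>
                tconj θ + tMulM (tMulM (tpow B ij.1) (pqm p q)) (tpow B ij.2) a b) := by
              have hs := Finset.le_sup (f := fun ij : ℕ × ℕ => tconj θ + tMulM (tMulM (tpow B ij.1) (pqm p q)) (tpow B ij.2) a b) hmem
              simp only at hs
              exact hs
          _ ≤ _ := le_max_left _ _
      -- case: mixed ⋅ B
      · rw [finsetSup_add]
        apply Finset.sup_le
        intro ij hij
        simp only [Pset, Finset.mem_filter, Finset.mem_product, Finset.mem_range] at hij
        have hmem : (ij.1, ij.2 + 1) ∈ Pset n (k+1) := by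
          simp only [Pset, Finset.mem_filter, Finset.mem_product, Finset.mem_range]
          omega
        rw [add_assoc]
        have hle : tMulM (tMulM (tpow B ij.1) (pqm p q)) (tpow B ij.2) a c + B c b
            ≤ tMulM (tMulM (tpow B ij.1) (pqm p q)) (tpow B (ij.2+1)) a b := by
          rw [hWsucc]
          exact le_tSum (fun c =>
            tMulM (tMulM (tpow B ij.1) (pqm p q)) (tpow B ij.2) a c + B c b) c
        refine le_trans (add_le_add le_rfl hle) (le_trans ?_ (le_max_left _ _))
        have hs := Finset.le_sup (f := fun ij : ℕ × ℕ => tconj θ + tMulM (tMulM (tpow B ij.1) (pqm p q)) (tpow B ij.2) a b) hmem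
        simp only at hs
        exact hs
      -- case: Bᵏ ⋅ X
      · have e1 : tpow B k a c + (tconj θ + (p c + tconj (q b)))
            = tconj θ + (tpow B k a c + (p c + tconj (q b))) := by abel
        rw [e1]
        have e2 : tpow B k a c + (p c + tconj (q b))
            ≤ tMulM (tMulM (tpow B k) (pqm p q)) (tpow B 0) a b := by
          rw [hW0]
          exact le_tSum (fun e => tpow B k a e + pqm p q e b) c
        have hmem : (k, 0) ∈ Pset n (k+1) := by
          simp only [Pset, Finset.mem_filter, Finset.mem_product, Finset.mem_range]
          omega
        refine le_trans (add_le_add le_rfl e2) (le_trans ?_ (le_max_left _ _))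
        have hs := Finset.le_sup (f := fun ij : ℕ × ℕ => tconj θ + tMulM (tMulM (tpow B ij.1) (pqm p q)) (tpow B ij.2) a b) hmem
        simp only at hs
        exact hs
      -- case: Bᵏ ⋅ B
      · refine le_trans ?_ (le_max_right _ _)
        exact le_tSum (fun c => tpow B k a c + B c b) c
  have hBleM : ∀ c d, B c d ≤ M c d := fun c d => le_max_right _ _
  apply le_antisymm
  · -- upper
    apply tSum_le
    intro k
    refine le_trans (upper k k.isLt a b) (max_le_max ?_ ?_)
    · apply Finset.sup_mono
      intro ij hij
      simp only [Pset, Finset.mem_filter, Finset.mem_product, Finset.mem_range] at hij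
      simp only [pairSet, Finset.mem_filter, Finset.mem_product, Finset.mem_range]
      have := k.isLt
      omega
    · exact le_tSum (fun k : Fin n => tpow B (k : ℕ) a b) k
  · -- lower
    apply max_le
    · apply Finset.sup_le
      intro ij hij
      simp only [pairSet, Finset.mem_filter, Finset.mem_product, Finset.mem_range] at hij
      have hXleM : ∀ c d, tconj θ + pqm p q c d ≤ M c d := fun c d => le_max_left _ _
      have h1 : tconj θ + tMulM (tMulM (tpow B ij.1) (pqm p q)) (tpow B ij.2) a b
          = tMulM (tMulM (tpow B ij.1) (fun c d => tconj θ + pqm p q c d)) (tpow B ij.2) a b := by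
        rw [tMulM_smul_right, tMulM_smul_left]
      rw [h1]
      have h2 := tMulM_mono (n := n)
        (tMulM_mono (tpow_mono hBleM ij.1) hXleM) (tpow_mono hBleM ij.2) a b
      refine le_trans h2 ?_
      have h3 : tMulM (tMulM (tpow M ij.1) M) (tpow M ij.2)
          = tpow M (ij.1 + 1 + ij.2) := (tpow_add M (ij.1 + 1) ij.2).symm
      rw [h3]
      have hlt : ij.1 + 1 + ij.2 < n := by omega
      exact le_tSum (fun k : Fin n => tpow M (k : ℕ) a b) ⟨ij.1 + 1 + ij.2, hlt⟩
    · exact tSum_mono fun k => tpow_mono hBleM (k : ℕ) a b
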